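/- Let V and W be KV-bimodules of a KV-algebra A over a field F of characteristic zero, and let θ : A × W → V and ψ : W × A → V be bilinear maps satisfying, for all a,b ∈ A and w ∈ W: (i) −aθ(b,w) + θ(ab,w) + θ(b,aw) + bθ(a,w) − θ(ba,w) − θ(a,bw) = 0, and (ii) −aψ(w,b) + ψ(aw,b) + ψ(w,ab) − ψ(w,a)b − ψ(wa,b) − θ(a,wb) + θ(a,w)b = 0. Then T := V ⊕ W with the actions a·(v,w) := (av + θ(a,w), aw) and (v,w)·a := (va + ψ(w,a), wa) is a KV-bimodule of A, V ⊕ {0} is a sub-bimodule of T, and the quotient T/(V ⊕ {0}) is isomorphic to W as a KV-bimodule. -/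
import Mathlib


/-- given a (1,1)-cocycle pair `(θ, ψ)`, the space `T = V ⊕ W` with
actions `a·(v,w) = (av + θ(a,w), aw)` and `(v,w)·a = (va + ψ(w,a), wa)` is a
KV-bimodule of `A`, `V ⊕ {0}` is a sub-bimodule, and the quotient is `W`. -/
theorem extension_of_kv_modules_from_cocycle
    {F : Type*} [Field F] [CharZero F]
    {A : Type*} [AddCommGroup A] [Module F A]
    {V : Type*} [AddCommGroup V] [Module F V]
    {W : Type*} [AddCommGroup W] [Module F W]
    (mul : A →ₗ[F] A →ₗ[F] A)
    (hA : ∀ a b c : A, mul (mul a b) c - mul a (mul b c)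
        = mul (mul b a) c - mul b (mul a c))
    (lV : A →ₗ[F] V →ₗ[F] V) (rV : V →ₗ[F] A →ₗ[F] V)
    (hV1 : ∀ (a b : A) (v : V), lV (mul a b) v - lV a (lV b v)
        = lV (mul b a) v - lV b (lV a v))
    (hV2 : ∀ (a : A) (v : V) (b : A), rV (lV a v) b - lV a (rV v b)
        = rV (rV v a) b - rV v (mul a b))
    (lW : A →ₗ[F] W →ₗ[F] W) (rW : W →ₗ[F] A →ₗ[F] W)
    (hW1 : ∀ (a b : A) (w : W), lW (mul a b) w - lW a (lW b w)
        = lW (mul b a) w - lW b (lW a w))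
    (hW2 : ∀ (a : A) (w : W) (b : A), rW (lW a w) b - lW a (rW w b)
        = rW (rW w a) b - rW w (mul a b))
    (θ : A →ₗ[F] W →ₗ[F] V) (ψ : W →ₗ[F] A →ₗ[F] V)
    -- cocycle identity (i)
    (hθ : ∀ (a b : A) (w : W),
      - lV a (θ b w) + θ (mul a b) w + θ b (lW a w)
        + lV b (θ a w) - θ (mul b a) w - θ a (lW b w) = 0)
    -- cocycle identity (ii)
    (hψ : ∀ (a : A) (w : W) (b : A),
      - lV a (ψ w b) + ψ (lW a w) b + ψ w (mul a b) - rV (ψ w a) b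
        - ψ (rW w a) b - θ a (rW w b) + rV (θ a w) b = 0) :
    -- the actions on `T = V ⊕ W`
    letI lT : A → V × W → V × W := fun a p => (lV a p.1 + θ a p.2, lW a p.2)
    letI rT : V × W → A → V × W := fun p a => (rV p.1 a + ψ p.2 a, rW p.2 a)
    -- (1) `T` is a KV-bimodule of `A`
    (∀ (a b : A) (p : V × W), lT (mul a b) p - lT a (lT b p)
        = lT (mul b a) p - lT b (lT a p))
    ∧ (∀ (a : A) (p : V × W) (b : A), rT (lT a p) b - lT a (rT p b)
        = rT (rT p a) b - rT p (mul a b))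
    -- (2) `V ⊕ {0}` is a sub-bimodule
    ∧ (∀ (a : A) (v : V), (lT a (v, 0)).2 = 0 ∧ (rT (v, 0) a).2 = 0)
    -- (3) the projection `T → W` is a surjective bimodule morphism with kernel `V ⊕ {0}`,
    -- so `T/(V ⊕ {0}) ≅ W`
    ∧ (∀ (a : A) (p : V × W), (lT a p).2 = lW a p.2 ∧ (rT p a).2 = rW p.2 a)
    ∧ (∀ w : W, ∃ p : V × W, p.2 = w)
    ∧ (∀ p : V × W, p.2 = 0 ↔ ∃ v : V, p = (v, 0)) := by
  refine ⟨?_, ?_, ?_, ?_, ?_, ?_⟩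
  · intro a b p
    have h1 := hV1 a b p.1
    have h2 := hθ a b p.2
    have h3 := hW1 a b p.2
    simp only [Prod.ext_iff, Prod.fst_sub, Prod.snd_sub, map_add, map_sub, LinearMap.add_apply, LinearMap.sub_apply]
    constructor
    · rw [sub_eq_sub_iff_sub_eq_sub] at h1 ⊢
      linear_combination (norm := abel) h1 + h2
    · linear_combination (norm := abel) h3
  · intro a p b
    have h1 := hV2 a p.1 b
    have h2 := hψ a p.2 b
    have h3 := hW2 a p.2 b
    simp only [Prod.ext_iff, Prod.fst_sub, Prod.snd_sub, map_add, map_sub, LinearMap.add_apply, LinearMap.sub_apply]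
    constructor
    · linear_combination (norm := abel) h1 + h2
    · linear_combination (norm := abel) h3
  · intro a v; simp
  · intro a p; exact ⟨rfl, rfl⟩
  · intro w; exact ⟨(0, w), rfl⟩
  · intro p
    constructor
    · intro h; exact ⟨p.1, Prod.ext rfl h⟩
    · rintro ⟨v, rfl⟩; rfl
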